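/- arXiv:2409.20172 — 2 statements merged into one kernel-verified Lean document; each statement's English description precedes it below -/
import Mathlib

section
/- Let H be a hypergraph, let (T, β) be a tree decomposition of H, and let S ⊆ V(H). Then there exists a set Y of nodes of T with |Y| ≤ ρ*_H(S) such that S ⊆ ⋃_{t ∈ Y} β(t). -/
open Finset
open scoped ENNReal

/-- A hypergraph: a finite vertex set, a finite set of nonempty hyperedges covering
all vertices. -/
structure FinHypergraph (α : Type*) where
  V : Finset α
  E : Finset (Finset α)
  edge_sub : ∀ e ∈ E, e ⊆ V
  edge_nonempty : ∀ e ∈ E, e.Nonempty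
  no_isolated : ∀ v ∈ V, ∃ e ∈ E, v ∈ e

/-- Degeneracy of a graph restricted to a finite vertex set `W`: the least `d` such that
every nonempty subset has a vertex with at most `d` neighbours inside the subset. -/
noncomputable def degeneracyOn {β : Type*} (G : SimpleGraph β) (W : Finset β) : ℕ :=
  sInf {d : ℕ | ∀ W' ⊆ W, W'.Nonempty → ∃ v ∈ W', ((W' : Set β) ∩ G.neighborSet v).ncard ≤ d}

namespace FinHypergraph

variable {α : Type*}

/-- The primal (Gaifman) graph of a hypergraph. -/
def primal (H : FinHypergraph α) : SimpleGraph α where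
  Adj u v := u ≠ v ∧ ∃ e ∈ H.E, u ∈ e ∧ v ∈ e
  symm := by
    constructor
    rintro u v ⟨hne, e, he, hu, hv⟩
    exact ⟨hne.symm, e, he, hv, hu⟩
  loopless := by
    constructor
    rintro u ⟨hne, -⟩
    exact hne rfl

/-- `S` is an `(A,B)`-separator in `H`: every path of the primal graph from a vertex
of `A` to a vertex of `B` meets `S`. -/
def IsSeparator (H : FinHypergraph α) (A B S : Finset α) : Prop :=
  ∀ a ∈ A, ∀ b ∈ B, ∀ p : H.primal.Walk a b, p.IsPath → ∃ v ∈ p.support, v ∈ S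

/-- `x` is a fractional `(A,B)`-separator in `H`. -/
def IsFracSeparator [DecidableEq α] (H : FinHypergraph α) (A B : Finset α) (x : α → ℝ) : Prop :=
  ∀ a ∈ A, ∀ b ∈ B, ∀ p : H.primal.Walk a b, p.IsPath →
    1 ≤ ∑ w ∈ p.support.toFinset, x w

/-- Fractional edge cover number of a weight function `x` on vertices. -/
noncomputable def fracCover [DecidableEq α] (H : FinHypergraph α) (x : α → ℝ) : ℝ :=
  sInf {c : ℝ | ∃ y : Finset α → ℝ, (∀ e, 0 ≤ y e ∧ y e ≤ 1) ∧
    (∀ v ∈ H.V, x v ≤ ∑ e ∈ H.E, if v ∈ e then y e else 0) ∧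
    c = ∑ e ∈ H.E, y e}

/-- Fractional edge cover number `ρ*_H(S)` of a vertex set. -/
noncomputable def fracCoverSet [DecidableEq α] (H : FinHypergraph α) (S : Finset α) : ℝ :=
  H.fracCover (fun v => if v ∈ S then 1 else 0)

/-- Fractional `E`-edge cover number of `x` (`∞` if no fractional `E`-edge cover exists). -/
noncomputable def fracCoverE [DecidableEq α] (H : FinHypergraph α) (E : Finset (Finset α))
    (x : α → ℝ) : ℝ≥0∞ :=
  sInf {c : ℝ≥0∞ | ∃ y : Finset α → ℝ, (∀ e, 0 ≤ y e ∧ y e ≤ 1) ∧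
    (∀ v ∈ H.V, x v ≤ ∑ e ∈ E, if v ∈ e then y e else 0) ∧
    c = ENNReal.ofReal (∑ e ∈ E, y e)}

/-- Fractional `E`-edge cover number `ρ*_{H,E}(S)` of a vertex set. -/
noncomputable def fracCoverESet [DecidableEq α] (H : FinHypergraph α) (E : Finset (Finset α))
    (S : Finset α) : ℝ≥0∞ :=
  H.fracCoverE E (fun v => if v ∈ S then 1 else 0)

/-- Integral edge cover number `ρ_H(S)`. -/
noncomputable def intCover [DecidableEq α] (H : FinHypergraph α) (S : Finset α) : ℕ :=
  sInf {n : ℕ | ∃ F ⊆ H.E, S ⊆ F.biUnion id ∧ F.card = n}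

/-- Independence number `α_H(R)`: maximum size of a subset of `R` such that no
hyperedge contains two of its vertices. -/
noncomputable def indepNum [DecidableEq α] (H : FinHypergraph α) (R : Finset α) : ℕ :=
  sSup {n : ℕ | ∃ I ⊆ R, (∀ e ∈ H.E, (I ∩ e).card ≤ 1) ∧ I.card = n}

/-- Maximum intersection size `η_H` of two distinct hyperedges. -/
noncomputable def eta [DecidableEq α] (H : FinHypergraph α) : ℕ :=
  sSup {n : ℕ | ∃ e₁ ∈ H.E, ∃ e₂ ∈ H.E, e₁ ≠ e₂ ∧ n = (e₁ ∩ e₂).card}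

/-- The (bipartite) incidence graph of a hypergraph. -/
def incidence (H : FinHypergraph α) : SimpleGraph (α ⊕ Finset α) where
  Adj p q :=
    (∃ v e, p = Sum.inl v ∧ q = Sum.inr e ∧ e ∈ H.E ∧ v ∈ e) ∨
    (∃ v e, p = Sum.inr e ∧ q = Sum.inl v ∧ e ∈ H.E ∧ v ∈ e)
  symm := by
    constructor
    rintro p q (⟨v, e, rfl, rfl, he, hv⟩ | ⟨v, e, rfl, rfl, he, hv⟩)
    · exact Or.inr ⟨v, e, rfl, rfl, he, hv⟩
    · exact Or.inl ⟨v, e, rfl, rfl, he, hv⟩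
  loopless := by
    constructor
    rintro p (⟨v, e, rfl, h, -, -⟩ | ⟨v, e, rfl, h, -, -⟩) <;> exact absurd h (by simp)

/-- `μ_H`: degeneracy of the incidence graph of `H`. -/
noncomputable def mu [DecidableEq α] (H : FinHypergraph α) : ℕ :=
  degeneracyOn H.incidence (H.V.image Sum.inl ∪ H.E.image Sum.inr)

/-- `γ(P) = ∑_{e ∈ E(H) : e ∩ P ≠ ∅} γ(e)`. -/
noncomputable def edgeWeight [DecidableEq α] (H : FinHypergraph α) (γ : Finset α → ℝ)
    (P : Finset α) : ℝ :=
  ∑ e ∈ H.E, if (e ∩ P).Nonempty then γ e else 0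

/-- `u` can reach `v` by a walk of the primal graph avoiding `S`. -/
def ReachOutside (H : FinHypergraph α) (S : Finset α) (u v : α) : Prop :=
  ∃ p : H.primal.Walk u v, ∀ w ∈ p.support, w ∉ S

/-- The connected component of `v` in the primal graph of `H` after deleting `S`. -/
noncomputable def comp (H : FinHypergraph α) (S : Finset α) (v : α) : Finset α := by
  classical exact H.V.filter (fun u => H.ReachOutside S v u)

/-- `S` is a `(γ,φ)`-balanced separator in `H`. -/
def IsGammaBalSep [DecidableEq α] (H : FinHypergraph α) (γ : Finset α → ℝ) (φ : ℝ)
    (S : Finset α) : Prop :=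
  ∀ v ∈ H.V, v ∉ S → H.edgeWeight γ (H.comp S v) ≤ φ * H.edgeWeight γ H.V

/-- `S` is a `(Z,φ)`-balanced separator in `H`. -/
def IsZBalSep [DecidableEq α] (H : FinHypergraph α) (Z : Finset α) (φ : ℝ)
    (S : Finset α) : Prop :=
  ∀ v ∈ H.V, v ∉ S →
    H.fracCoverSet (H.comp S v ∩ Z) ≤ φ * H.fracCoverSet Z

/-- `dist*_{H,x}(u,v)`: the minimum of `1` and the minimum total `x`-weight of a path
from `u` to `v` in the primal graph. -/
noncomputable def dist1 [DecidableEq α] (H : FinHypergraph α) (x : α → ℝ) (u v : α) : ℝ :=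
  sInf ({1} ∪ {c : ℝ | ∃ p : H.primal.Walk u v, p.IsPath ∧ c = ∑ w ∈ p.support.toFinset, x w})

/-- `dist*_{H,x}(e,e') = min_{u ∈ e, v ∈ e'} dist*_{H,x}(u,v)`. -/
noncomputable def distE [DecidableEq α] (H : FinHypergraph α) (x : α → ℝ)
    (e e' : Finset α) : ℝ :=
  sInf {c : ℝ | ∃ u ∈ e, ∃ v ∈ e', c = H.dist1 x u v}

/-- `x` is a fractional `(γ,φ)`-balanced separator in `H`. -/
def IsFracGammaBalSep [DecidableEq α] (H : FinHypergraph α) (γ : Finset α → ℝ) (φ : ℝ)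
    (x : α → ℝ) : Prop :=
  ∀ e ∈ H.E, (1 - φ) * (∑ e' ∈ H.E, γ e') ≤ ∑ e' ∈ H.E, H.distE x e e' * γ e'

/-- The induced subhypergraph `H[Q]` for `Q ⊆ V(H)`. -/
def induce [DecidableEq α] (H : FinHypergraph α) (Q : Finset α) (hQ : Q ⊆ H.V) :
    FinHypergraph α where
  V := Q
  E := (H.E.image (fun e => e ∩ Q)).filter (fun e => e.Nonempty)
  edge_sub := by
    intro e he
    simp only [mem_filter, mem_image] at he
    obtain ⟨⟨e', -, rfl⟩, -⟩ := he
    exact inter_subset_right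
  edge_nonempty := by
    intro e he
    exact (mem_filter.mp he).2
  no_isolated := by
    intro v hv
    obtain ⟨e, he, hve⟩ := H.no_isolated v (hQ hv)
    exact ⟨e ∩ Q, mem_filter.mpr ⟨mem_image.mpr ⟨e, he, rfl⟩,
      ⟨v, mem_inter.mpr ⟨hve, hv⟩⟩⟩, mem_inter.mpr ⟨hve, hv⟩⟩

/-- The ball `B^Q_c(r)` of radius `r` around `c` in `H[Q]` with respect to `x`. -/
noncomputable def ball [DecidableEq α] (H : FinHypergraph α) (x : α → ℝ) (Q : Finset α)
    (hQ : Q ⊆ H.V) (c : α) (r : ℝ) : Finset α := by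
  classical exact Q.filter (fun v => (H.induce Q hQ).dist1 x c v ≤ r)

end FinHypergraph


namespace TreeAux

open SimpleGraph

variable {ι : Type} [DecidableEq ι] {T : SimpleGraph ι}

/-- The unique path between two vertices of a tree. -/
noncomputable def tp (hT : T.IsTree) (a b : ι) : T.Walk a b :=
  (hT.existsUnique_path a b).choose

lemma tp_isPath (hT : T.IsTree) (a b : ι) : (tp hT a b).IsPath :=
  (hT.existsUnique_path a b).choose_spec.1

lemma tp_unique (hT : T.IsTree) {a b : ι} (p : T.Walk a b) (hp : p.IsPath) :
    p = tp hT a b :=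
  (hT.existsUnique_path a b).choose_spec.2 p hp

lemma tp_support_subset (hT : T.IsTree) {a b : ι} (w : T.Walk a b) :
    (tp hT a b).support ⊆ w.support := by
  rw [← tp_unique hT w.bypass w.bypass_isPath]
  exact w.support_bypass_subset

/-- Depth of a vertex w.r.t. a root `r`. -/
noncomputable def dep (hT : T.IsTree) (r a : ι) : ℕ := (tp hT r a).length

lemma tp_takeUntil (hT : T.IsTree) {r a b : ι} (h : a ∈ (tp hT r b).support) :
    (tp hT r b).takeUntil a h = tp hT r a :=
  tp_unique hT _ ((tp_isPath hT r b).takeUntil h)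

lemma tp_dropUntil (hT : T.IsTree) {r a b : ι} (h : a ∈ (tp hT r b).support) :
    (tp hT r b).dropUntil a h = tp hT a b :=
  tp_unique hT _ ((tp_isPath hT r b).dropUntil h)

lemma dep_split (hT : T.IsTree) {r a b : ι} (h : a ∈ (tp hT r b).support) :
    dep hT r b = dep hT r a + ((tp hT r b).dropUntil a h).length := by
  conv_lhs => rw [dep, ← Walk.take_spec (tp hT r b) h]
  rw [Walk.length_append, tp_takeUntil hT h]
  rfl

lemma dep_le (hT : T.IsTree) {r a b : ι} (h : a ∈ (tp hT r b).support) :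
    dep hT r a ≤ dep hT r b := by
  rw [dep_split hT h]; omega

lemma eq_of_mem_dep_ge (hT : T.IsTree) {r a b : ι} (h : a ∈ (tp hT r b).support)
    (hd : dep hT r b ≤ dep hT r a) : a = b := by
  have h2 := dep_split hT h
  have h3 : ((tp hT r b).dropUntil a h).length = 0 := by omega
  exact Walk.eq_of_length_eq_zero h3

lemma isPath_concat {u v w : ι} {p : T.Walk u v} (hp : p.IsPath) (h : T.Adj v w)
    (hw : w ∉ p.support) : (p.concat h).IsPath := by
  rw [← Walk.isPath_reverse_iff, Walk.reverse_concat, Walk.cons_isPath_iff,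
    Walk.isPath_reverse_iff, Walk.support_reverse]
  exact ⟨hp, fun hc => hw (List.mem_reverse.mp hc)⟩

lemma anc_step (hT : T.IsTree) {r m : ι} {C : Set ι}
    (hmin : ∀ s ∈ C, dep hT r m ≤ dep hT r s) {z z' : ι} (hz' : z' ∈ C)
    (hadj : T.Adj z z') (hm : m ∈ (tp hT r z).support) : m ∈ (tp hT r z').support := by
  by_cases hzz : z ∈ (tp hT r z').support
  · rw [← tp_takeUntil hT hzz] at hm
    exact Walk.support_takeUntil_subset _ hzz hm
  · have hcp : ((tp hT r z').concat hadj.symm).IsPath :=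
      isPath_concat (tp_isPath hT r z') hadj.symm hzz
    have he : (tp hT r z').concat hadj.symm = tp hT r z := tp_unique hT _ hcp
    rw [← he, Walk.support_concat] at hm
    rw [List.mem_append, List.mem_singleton] at hm
    rcases hm with hm' | rfl
    · exact hm'
    · exfalso
      have hlen : dep hT r m = dep hT r z' + 1 := by
        rw [dep, ← he, Walk.length_concat]; rfl
      have := hmin z' hz'
      omega

lemma anc_of_walk (hT : T.IsTree) {r m : ι} {C : Set ι}
    (hmin : ∀ s ∈ C, dep hT r m ≤ dep hT r s) :
    ∀ {z s : ι} (Q : T.Walk z s), (∀ x ∈ Q.support, x ∈ C) →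
      m ∈ (tp hT r z).support → m ∈ (tp hT r s).support := by
  intro z s Q
  induction Q with
  | nil => exact fun _ hm => hm
  | cons h q ih =>
    intro hQ hm
    refine ih (fun x hx => hQ x (by rw [Walk.support_cons]; exact List.mem_cons_of_mem _ hx)) ?_
    exact anc_step hT hmin
      (hQ _ (by rw [Walk.support_cons]; exact List.mem_cons_of_mem _ q.start_mem_support)) h hm

lemma walk_in_set {C : Set ι} (hC : (SimpleGraph.induce C T).Connected) {a b : ι}
    (ha : a ∈ C) (hb : b ∈ C) : ∃ w : T.Walk a b, ∀ x ∈ w.support, x ∈ C := by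
  obtain ⟨p⟩ := hC ⟨a, ha⟩ ⟨b, hb⟩
  refine ⟨p.map (SimpleGraph.Embedding.induce C).toHom, ?_⟩
  intro x hx
  change x ∈ (p.map (SimpleGraph.Embedding.induce C).toHom).support at hx
  rw [Walk.support_map, List.mem_map] at hx
  obtain ⟨⟨y, hy⟩, -, rfl⟩ := hx
  exact hy

/-- Key geometric lemma: if `mv`, `mu` are the depth-minimal elements of connected
sets `Cv`, `Cu` respectively, `dep mu ≤ dep mv`, and `Cv ∩ Cu` is nonempty, then
`mv ∈ Cu`. -/
lemma key (hT : T.IsTree) (r : ι) {Cv Cu : Set ι}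
    (hCv : (SimpleGraph.induce Cv T).Connected) (hCu : (SimpleGraph.induce Cu T).Connected)
    {mv mu te : ι} (hmv : mv ∈ Cv) (hmu : mu ∈ Cu)
    (hminv : ∀ s ∈ Cv, dep hT r mv ≤ dep hT r s)
    (hminu : ∀ s ∈ Cu, dep hT r mu ≤ dep hT r s)
    (hdep : dep hT r mu ≤ dep hT r mv)
    (htev : te ∈ Cv) (hteu : te ∈ Cu) : mv ∈ Cu := by
  obtain ⟨wv, hwv⟩ := walk_in_set hCv hmv htev
  obtain ⟨wu, hwu⟩ := walk_in_set hCu hmu hteu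
  have hv : mv ∈ (tp hT r te).support :=
    anc_of_walk hT hminv wv hwv ((tp hT r mv).end_mem_support)
  have hu : mu ∈ (tp hT r te).support :=
    anc_of_walk hT hminu wu hwu ((tp hT r mu).end_mem_support)
  rw [← Walk.take_spec (tp hT r te) hu, Walk.mem_support_append_iff] at hv
  rcases hv with hv | hv
  · -- mv on the path from r to mu, hence depth forces mv = mu
    rw [tp_takeUntil hT hu] at hv
    have h1 : dep hT r mv ≤ dep hT r mu := dep_le hT hv
    have : mv = mu := eq_of_mem_dep_ge hT hv (by omega)
    rwa [this]
  · -- mv on the path from mu to te, which lies inside Cu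
    rw [tp_dropUntil hT hu] at hv
    exact hwu mv (tp_support_subset hT wu hv)

end TreeAux

/-- A tree decomposition of a hypergraph. -/
structure TreeDecomp {α : Type*} (H : FinHypergraph α) where
  ι : Type
  fintype : Fintype ι
  T : SimpleGraph ι
  isTree : T.IsTree
  bag : ι → Finset α
  bag_sub : ∀ t, bag t ⊆ H.V
  bag_conn : ∀ v ∈ H.V, (SimpleGraph.induce {t | v ∈ bag t} T).Connected
  edge_bag : ∀ e ∈ H.E, ∃ t, e ⊆ bag t
/-- Any vertex set `S` can be covered by at most `ρ*_H(S)` bags of any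
tree decomposition of `H`. -/
theorem cover_by_bags {α : Type*} [DecidableEq α] (H : FinHypergraph α)
    (D : TreeDecomp H) (S : Finset α) (hS : S ⊆ H.V) :
    ∃ Y : Finset D.ι, (Y.card : ℝ) ≤ H.fracCoverSet S ∧ S ⊆ Y.biUnion D.bag := by
  classical
  haveI := D.fintype
  obtain ⟨r⟩ : Nonempty D.ι := D.isTree.isConnected.nonempty
  -- a topmost (depth-minimal) bag for each vertex
  have htop : ∀ u : α, ∃ t, u ∈ H.V → u ∈ D.bag t ∧
      ∀ t', u ∈ D.bag t' → TreeAux.dep D.isTree r t ≤ TreeAux.dep D.isTree r t' := by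
    intro u
    by_cases hu : u ∈ H.V
    swap
    · exact ⟨r, fun h => absurd h hu⟩
    obtain ⟨e, he, hue⟩ := H.no_isolated u hu
    obtain ⟨t0, ht0⟩ := D.edge_bag e he
    have hne : (Finset.univ.filter (fun t => u ∈ D.bag t)).Nonempty :=
      ⟨t0, by simp [ht0 hue]⟩
    obtain ⟨t, htmem, htmin⟩ := Finset.exists_min_image _ (TreeAux.dep D.isTree r) hne
    exact ⟨t, fun _ => ⟨(Finset.mem_filter.mp htmem).2, fun t' ht' => htmin t' (by simp [ht'])⟩⟩
  choose top htop' using htop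
  have htop1 : ∀ u, u ∈ H.V → u ∈ D.bag (top u) := fun u hu => (htop' u hu).1
  have htop2 : ∀ u, u ∈ H.V → ∀ t', u ∈ D.bag t' →
      TreeAux.dep D.isTree r (top u) ≤ TreeAux.dep D.isTree r t' :=
    fun u hu => (htop' u hu).2
  -- the main induction
  have main : ∀ n (S : Finset α), S.card = n → S ⊆ H.V →
      ∀ y : Finset α → ℝ, (∀ e, 0 ≤ y e ∧ y e ≤ 1) →
      (∀ v ∈ S, (1:ℝ) ≤ ∑ e ∈ H.E, if v ∈ e then y e else 0) →
      ∃ Y : Finset D.ι, (Y.card : ℝ) ≤ ∑ e ∈ H.E, y e ∧ S ⊆ Y.biUnion D.bag := by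
    intro n
    induction n using Nat.strong_induction_on with
    | _ n ih =>
      intro S hcard hSV y hy hcov
      rcases S.eq_empty_or_nonempty with rfl | hne
      · exact ⟨∅, by simpa using Finset.sum_nonneg (fun e _ => (hy e).1), by simp⟩
      obtain ⟨v, hvS, hvmax⟩ := S.exists_max_image (fun u => TreeAux.dep D.isTree r (top u)) hne
      have hvV : v ∈ H.V := hSV hvS
      set t0 : D.ι := top v with ht0def
      have claim : ∀ e ∈ H.E, v ∈ e → ∀ u ∈ e, u ∈ S → u ∈ D.bag t0 := by
        intro e he hve u hue huS
        have huV : u ∈ H.V := hSV huS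
        obtain ⟨te, hte⟩ := D.edge_bag e he
        exact TreeAux.key D.isTree r (D.bag_conn v hvV) (D.bag_conn u huV)
          (htop1 v hvV) (htop1 u huV)
          (fun s hs => htop2 v hvV s hs) (fun s hs => htop2 u huV s hs)
          (hvmax u huS) (hte hve) (hte hue)
      set y' : Finset α → ℝ := fun e => if v ∈ e then 0 else y e with hy'def
      have hy' : ∀ e, 0 ≤ y' e ∧ y' e ≤ 1 := by
        intro e; by_cases h : v ∈ e <;> simp [hy'def, h, (hy e).1, (hy e).2]
      set S' : Finset α := S \ D.bag t0 with hS'def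
      have hcov' : ∀ u ∈ S', (1:ℝ) ≤ ∑ e ∈ H.E, if u ∈ e then y' e else 0 := by
        intro u huS'
        obtain ⟨huS, hub⟩ := Finset.mem_sdiff.mp huS'
        calc (1:ℝ) ≤ ∑ e ∈ H.E, if u ∈ e then y e else 0 := hcov u huS
          _ = ∑ e ∈ H.E, if u ∈ e then y' e else 0 := by
            refine Finset.sum_congr rfl (fun e he => ?_)
            by_cases hu : u ∈ e
            · by_cases hv : v ∈ e
              · exact absurd (claim e he hv u hu huS) hub
              · simp [hu, hy'def, hv]
            · simp [hu]
      have hw' : ∑ e ∈ H.E, y' e ≤ (∑ e ∈ H.E, y e) - 1 := by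
        have h1 : (1:ℝ) ≤ ∑ e ∈ H.E, if v ∈ e then y e else 0 := hcov v hvS
        have h2 : ∑ e ∈ H.E, y' e
            = (∑ e ∈ H.E, y e) - ∑ e ∈ H.E, (if v ∈ e then y e else 0) := by
          rw [← Finset.sum_sub_distrib]
          refine Finset.sum_congr rfl (fun e _ => ?_)
          by_cases hv : v ∈ e <;> simp [hy'def, hv]
        linarith
      have hvb : v ∈ D.bag t0 := htop1 v hvV
      have hcard' : S'.card < n := by
        calc S'.card < S.card := Finset.card_lt_card
              ((Finset.ssubset_iff_of_subset Finset.sdiff_subset).mpr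
                ⟨v, hvS, by simp [hS'def, hvb]⟩)
          _ = n := hcard
      obtain ⟨Y', hY'card, hY'cov⟩ := ih S'.card hcard' S' rfl
        (fun u hu => hSV (Finset.mem_sdiff.mp hu).1) y' hy' hcov'
      refine ⟨insert t0 Y', ?_, ?_⟩
      · calc ((insert t0 Y').card : ℝ) ≤ ((Y'.card + 1 : ℕ) : ℝ) := by
              exact_mod_cast Finset.card_insert_le _ _
          _ = (Y'.card : ℝ) + 1 := by push_cast; ring
          _ ≤ (∑ e ∈ H.E, y' e) + 1 := by linarith
          _ ≤ ∑ e ∈ H.E, y e := by linarith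
      · intro u huS
        by_cases hub : u ∈ D.bag t0
        · exact Finset.mem_biUnion.mpr ⟨t0, Finset.mem_insert_self _ _, hub⟩
        · obtain ⟨t, htY, htb⟩ := Finset.mem_biUnion.mp
            (hY'cov (Finset.mem_sdiff.mpr ⟨huS, hub⟩))
          exact Finset.mem_biUnion.mpr ⟨t, Finset.mem_insert_of_mem htY, htb⟩
  -- conclusion via infima
  set 𝒩 : Set ℕ := {n | ∃ Y : Finset D.ι, Y.card = n ∧ S ⊆ Y.biUnion D.bag} with h𝒩
  have h𝒩ne : 𝒩.Nonempty := by
    refine ⟨(Finset.univ : Finset D.ι).card, Finset.univ, rfl, ?_⟩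
    intro u huS
    obtain ⟨e, he, hue⟩ := H.no_isolated u (hS huS)
    obtain ⟨t, ht⟩ := D.edge_bag e he
    exact Finset.mem_biUnion.mpr ⟨t, Finset.mem_univ t, ht hue⟩
  obtain ⟨Y0, hY0card, hY0cov⟩ := Nat.sInf_mem h𝒩ne
  refine ⟨Y0, ?_, hY0cov⟩
  rw [hY0card]
  by_contra hlt
  push_neg at hlt
  set W : Set ℝ := {c : ℝ | ∃ y : Finset α → ℝ, (∀ e, 0 ≤ y e ∧ y e ≤ 1) ∧
      (∀ v ∈ H.V, (if v ∈ S then (1:ℝ) else 0) ≤ ∑ e ∈ H.E, if v ∈ e then y e else 0) ∧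
      c = ∑ e ∈ H.E, y e} with hW
  have hfc : H.fracCoverSet S = sInf W := rfl
  have hWne : W.Nonempty := by
    refine ⟨∑ _e ∈ H.E, (1:ℝ), fun _ => 1, fun e => ⟨zero_le_one, le_refl 1⟩, ?_, rfl⟩
    intro u huV
    by_cases huS : u ∈ S
    · obtain ⟨e, he, hue⟩ := H.no_isolated u huV
      simp only [huS, if_true]
      calc (1:ℝ) = if u ∈ e then (1:ℝ) else 0 := by simp [hue]
        _ ≤ ∑ e' ∈ H.E, if u ∈ e' then (1:ℝ) else 0 :=
          Finset.single_le_sum (f := fun e' => if u ∈ e' then (1:ℝ) else 0)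
            (fun e' _ => by positivity) he
    · simp only [huS, if_false]
      exact Finset.sum_nonneg fun e _ => by positivity
  have hWbdd : BddBelow W := by
    refine ⟨0, fun c hc => ?_⟩
    obtain ⟨y, hy, -, rfl⟩ := hc
    exact Finset.sum_nonneg fun e _ => (hy e).1
  rw [hfc] at hlt
  obtain ⟨c, hcW, hclt⟩ := (csInf_lt_iff hWbdd hWne).mp hlt
  obtain ⟨y, hy, hycov, rfl⟩ := hcW
  obtain ⟨Y, hYcard, hYcov⟩ := main S.card S rfl hS y hy
    (fun v hv => by simpa [hv] using hycov v (hS hv))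
  have hle : sInf 𝒩 ≤ Y.card := Nat.sInf_le ⟨Y, rfl, hYcov⟩
  have : ((sInf 𝒩 : ℕ) : ℝ) ≤ (Y.card : ℝ) := by exact_mod_cast hle
  linarith
end

section
/- Let H be a hypergraph with at least two hyperedges and η_H ≥ 1 that admits a tree decomposition of fractional hypertree width at most ω. Then μ_H ≤ 2·η_H·ω. -/
open Finset
open scoped ENNReal

section TreeLemmas

open SimpleGraph

variable {ι : Type*} {G : SimpleGraph ι}

private lemma append_isPath' {a b c : ι} {p : G.Walk a b} {q : G.Walk b c}
    (hp : p.IsPath) (hq : q.IsPath) (h : ∀ x ∈ p.support, x ∈ q.support → x = b) :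
    (p.append q).IsPath := by
  rw [Walk.isPath_def, Walk.support_append, List.nodup_append]
  have hq' := hq.support_nodup
  rw [q.support_eq_cons] at hq'
  refine ⟨hp.support_nodup, (List.nodup_cons.mp hq').2, ?_⟩
  intro x hx y hx' hxy
  subst hxy
  have hxq : x ∈ q.support := by rw [q.support_eq_cons]; exact List.mem_cons_of_mem _ hx'
  have hxb := h x hx hxq
  subst hxb
  exact (List.nodup_cons.mp hq').1 hx'

/-- The unique path between two vertices of a tree. -/
noncomputable def thePath (hG : G.IsTree) (a b : ι) : G.Walk a b :=
  (hG.existsUnique_path a b).choose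

lemma thePath_isPath (hG : G.IsTree) (a b : ι) : (thePath hG a b).IsPath :=
  (hG.existsUnique_path a b).choose_spec.1

lemma path_unique (hG : G.IsTree) {a b : ι} {p : G.Walk a b} (hp : p.IsPath) :
    p = thePath hG a b :=
  (hG.existsUnique_path a b).choose_spec.2 p hp

lemma support_thePath_subset [DecidableEq ι] (hG : G.IsTree) {C : Set ι} (hC : (G.induce C).Connected)
    {a b : ι} (ha : a ∈ C) (hb : b ∈ C) : ∀ x ∈ (thePath hG a b).support, x ∈ C := by
  obtain ⟨w'⟩ := hC ⟨a, ha⟩ ⟨b, hb⟩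
  let w : G.Walk a b := w'.map (SimpleGraph.Embedding.induce C).toHom
  have hsub : ∀ x ∈ w.support, x ∈ C := by
    intro x hx
    change x ∈ (w'.map (SimpleGraph.Embedding.induce C).toHom).support at hx
    rw [Walk.support_map] at hx
    obtain ⟨y, -, rfl⟩ := List.mem_map.mp hx
    exact y.2
  have hby : w.bypass = thePath hG a b := path_unique hG w.bypass_isPath
  intro x hx
  rw [← hby] at hx
  exact hsub x (w.support_bypass_subset hx)

lemma length_lt_of_mem_thePath [DecidableEq ι] (hG : G.IsTree) {r x y : ι}
    (hx : x ∈ (thePath hG r y).support) (hxy : x ≠ y) :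
    (thePath hG r x).length < (thePath hG r y).length := by
  classical
  have htake : ((thePath hG r y).takeUntil x hx) = thePath hG r x :=
    path_unique hG ((thePath_isPath hG r y).takeUntil hx)
  have hspec := (thePath hG r y).take_spec hx
  have hlen : (thePath hG r y).length
      = ((thePath hG r y).takeUntil x hx).length + ((thePath hG r y).dropUntil x hx).length := by
    conv_lhs => rw [← hspec]
    exact Walk.length_append _ _
  have hdrop : ((thePath hG r y).dropUntil x hx).length ≠ 0 := fun h0 =>
    hxy (Walk.eq_of_length_eq_zero h0)
  rw [htake] at hlen
  omega

lemma exists_gateway [DecidableEq ι] [Finite ι] (hG : G.IsTree) (r : ι) {C : Set ι}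
    (hC : (G.induce C).Connected) :
    ∃ m ∈ C, ∀ t ∈ C, m ∈ (thePath hG r t).support := by
  classical
  have hne : C.Nonempty := by
    obtain ⟨⟨c, hc⟩⟩ := hC.nonempty
    exact ⟨c, hc⟩
  obtain ⟨m, hmC, hmin⟩ := Set.exists_min_image C (fun t => (thePath hG r t).length)
    (Set.toFinite C) hne
  refine ⟨m, hmC, fun t ht => ?_⟩
  have hQ : ∀ x ∈ (thePath hG m t).support, x ∈ C := support_thePath_subset hG hC hmC ht
  have hW : ((thePath hG r m).append (thePath hG m t)).IsPath := by
    apply append_isPath' (thePath_isPath hG r m) (thePath_isPath hG m t)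
    intro x hx hx'
    by_contra hne'
    exact absurd (hmin x (hQ x hx')) (not_le.mpr (length_lt_of_mem_thePath hG hx hne'))
  have heq := path_unique hG hW
  rw [← heq, Walk.mem_support_append_iff]
  exact Or.inr (Walk.start_mem_support _)

lemma gateway_mem [DecidableEq ι] [Finite ι] (hG : G.IsTree) (r : ι) {Cu : Set ι}
    (hCu : (G.induce Cu).Connected)
    {mu mv t : ι} (hmu : ∀ s ∈ Cu, mu ∈ (thePath hG r s).support)
    (hmuCu : mu ∈ Cu)
    (hmv : mv ∈ (thePath hG r t).support) (htu : t ∈ Cu)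
    (hdep : (thePath hG r mu).length ≤ (thePath hG r mv).length) :
    mv ∈ Cu := by
  classical
  have hmuP : mu ∈ (thePath hG r t).support := hmu t htu
  have hsplit := (thePath hG r t).take_spec hmuP
  have hcases : mv ∈ ((thePath hG r t).takeUntil mu hmuP).support ∨
      mv ∈ ((thePath hG r t).dropUntil mu hmuP).support := by
    rw [← Walk.mem_support_append_iff, hsplit]; exact hmv
  rcases hcases with h1 | h2
  · have htake : ((thePath hG r t).takeUntil mu hmuP) = thePath hG r mu :=
      path_unique hG ((thePath_isPath hG r t).takeUntil hmuP)
    rw [htake] at h1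
    by_cases hmm : mv = mu
    · rw [hmm]; exact hmuCu
    · exact absurd hdep (not_le.mpr (length_lt_of_mem_thePath hG h1 hmm))
  · have hdrop : ((thePath hG r t).dropUntil mu hmuP) = thePath hG mu t :=
      path_unique hG ((thePath_isPath hG r t).dropUntil hmuP)
    rw [hdrop] at h2
    exact support_thePath_subset hG hCu hmuCu htu mv h2

end TreeLemmas

lemma FinHypergraph.incidence_adj {α : Type*} (H : FinHypergraph α) (p q : α ⊕ Finset α) :
    H.incidence.Adj p q ↔ (∃ v e, p = Sum.inl v ∧ q = Sum.inr e ∧ e ∈ H.E ∧ v ∈ e) ∨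
      (∃ v e, p = Sum.inr e ∧ q = Sum.inl v ∧ e ∈ H.E ∧ v ∈ e) := Iff.rfl

/-- For every hypergraph `H` of fractional hypertree width at most `ω`,
the degeneracy of its incidence graph satisfies `μ_H ≤ 2·η_H·ω`. -/
theorem mu_le_eta_mul_width {α : Type*} [DecidableEq α] (H : FinHypergraph α)
    (hcard : 2 ≤ H.E.card) (hη : 1 ≤ H.eta)
    (D : TreeDecomp H) (ω : ℝ) (hω : ∀ t, H.fracCoverSet (D.bag t) ≤ ω) :
    (H.mu : ℝ) ≤ 2 * (H.eta : ℝ) * ω := by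
  classical
  have hη1 : (1:ℝ) ≤ (H.eta : ℝ) := by exact_mod_cast hη
  have hEne : H.E.Nonempty := Finset.card_pos.mp (by omega)
  have heta_ge : ∀ e₁ ∈ H.E, ∀ e₂ ∈ H.E, e₁ ≠ e₂ → (e₁ ∩ e₂).card ≤ H.eta := by
    intro e₁ h₁ e₂ h₂ hne
    unfold FinHypergraph.eta
    refine le_csSup ⟨H.V.card, ?_⟩ ⟨e₁, h₁, e₂, h₂, hne, rfl⟩
    rintro n ⟨f₁, hf₁, f₂, hf₂, -, rfl⟩
    exact Finset.card_le_card fun x hx => H.edge_sub f₁ hf₁ (Finset.mem_inter.mp hx).1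
  have hsetne : ∀ S' : Finset α, {c : ℝ | ∃ y : Finset α → ℝ, (∀ e, 0 ≤ y e ∧ y e ≤ 1) ∧
      (∀ v ∈ H.V, (if v ∈ S' then (1:ℝ) else 0) ≤ ∑ e ∈ H.E, if v ∈ e then y e else 0) ∧
      c = ∑ e ∈ H.E, y e}.Nonempty := by
    intro S'
    refine ⟨(H.E.card : ℝ), fun _ => 1, fun e => ⟨zero_le_one, le_refl 1⟩, fun v hv => ?_, by simp⟩
    obtain ⟨e, he, hve⟩ := H.no_isolated v hv
    have h1 : (1:ℝ) ≤ ∑ e ∈ H.E, if v ∈ e then (1:ℝ) else 0 := by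
      rw [Finset.sum_boole]
      exact_mod_cast Finset.card_pos.mpr ⟨e, Finset.mem_filter.mpr ⟨he, hve⟩⟩
    refine le_trans ?_ h1
    split <;> norm_num
  have hω1 : (1:ℝ) ≤ ω := by
    obtain ⟨e₀, he₀⟩ := hEne
    obtain ⟨t₀, ht₀⟩ := D.edge_bag e₀ he₀
    obtain ⟨v₀, hv₀⟩ := H.edge_nonempty e₀ he₀
    have hv₀b : v₀ ∈ D.bag t₀ := ht₀ hv₀
    refine le_trans ?_ (hω t₀)
    unfold FinHypergraph.fracCoverSet FinHypergraph.fracCover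
    refine le_csInf (hsetne (D.bag t₀)) ?_
    rintro c ⟨y, hy01, hycov, rfl⟩
    have h1 := hycov v₀ (D.bag_sub t₀ hv₀b)
    simp only [if_pos hv₀b] at h1
    refine le_trans h1 (Finset.sum_le_sum fun e _ => ?_)
    split
    · exact le_refl _
    · exact (hy01 e).1
  have hω0 : (0:ℝ) < ω := by linarith
  have hcover : ∀ t, ∀ ε : ℝ, 0 < ε → ∃ y : Finset α → ℝ, (∀ e, 0 ≤ y e ∧ y e ≤ 1) ∧
      (∀ v ∈ H.V, v ∈ D.bag t → (1:ℝ) ≤ ∑ e ∈ H.E, if v ∈ e then y e else 0) ∧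
      ∑ e ∈ H.E, y e < ω + ε := by
    intro t ε hε
    have hlt : H.fracCoverSet (D.bag t) < ω + ε := lt_of_le_of_lt (hω t) (by linarith)
    unfold FinHypergraph.fracCoverSet FinHypergraph.fracCover at hlt
    obtain ⟨c, hc, hclt⟩ := exists_lt_of_csInf_lt (hsetne (D.bag t)) hlt
    obtain ⟨y, hy01, hycov, rfl⟩ := hc
    refine ⟨y, hy01, fun v hv hvb => ?_, hclt⟩
    have h1 := hycov v hv
    simp only [if_pos hvb] at h1
    exact h1
  have h2ηω0 : (0:ℝ) ≤ 2 * (H.eta:ℝ) * ω := by nlinarith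
  set d₀ : ℕ := ⌊2 * (H.eta:ℝ) * ω⌋₊ with hd₀
  haveI := D.fintype
  haveI : DecidableEq D.ι := Classical.decEq _
  have hT := D.isTree
  obtain ⟨r⟩ : Nonempty D.ι := hT.isConnected.nonempty
  haveI : Nonempty D.ι := ⟨r⟩
  have hgw : ∀ u, u ∈ H.V → ∃ mm, mm ∈ {t | u ∈ D.bag t} ∧
      ∀ t ∈ {t | u ∈ D.bag t}, mm ∈ (thePath hT r t).support :=
    fun u hu => exists_gateway hT r (D.bag_conn u hu)
  choose! m hm1 hm2 using hgw
  have hmem : d₀ ∈ {d : ℕ | ∀ W' ⊆ (H.V.image Sum.inl ∪ H.E.image Sum.inr), W'.Nonempty →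
      ∃ v ∈ W', ((W' : Set (α ⊕ Finset α)) ∩ H.incidence.neighborSet v).ncard ≤ d} := by
    intro W' hW'sub hW'ne
    set S : Finset α := H.V.filter (fun v => Sum.inl v ∈ W') with hSdef
    set F : Finset (Finset α) := H.E.filter (fun e => Sum.inr e ∈ W') with hFdef
    have hSmem : ∀ u : α, u ∈ S ↔ u ∈ H.V ∧ Sum.inl u ∈ W' := by
      intro u; rw [hSdef]; exact Finset.mem_filter
    have hFmem : ∀ f : Finset α, f ∈ F ↔ f ∈ H.E ∧ Sum.inr f ∈ W' := by
      intro f; rw [hFdef]; exact Finset.mem_filter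
    have hSW : ∀ v : α, Sum.inl v ∈ W' ↔ v ∈ S := by
      intro v
      constructor
      · intro hv
        rcases Finset.mem_union.mp (hW'sub hv) with h | h
        · obtain ⟨v', hv', heq⟩ := Finset.mem_image.mp h
          obtain rfl : v' = v := Sum.inl_injective heq
          exact (hSmem _).mpr ⟨hv', hv⟩
        · obtain ⟨e', -, heq⟩ := Finset.mem_image.mp h
          exact absurd heq (by simp)
      · exact fun hv => ((hSmem v).mp hv).2
    have hFW : ∀ e : Finset α, Sum.inr e ∈ W' ↔ e ∈ F := by
      intro e
      constructor
      · intro he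
        rcases Finset.mem_union.mp (hW'sub he) with h | h
        · obtain ⟨v', -, heq⟩ := Finset.mem_image.mp h
          exact absurd heq (by simp)
        · obtain ⟨e', he', heq⟩ := Finset.mem_image.mp h
          obtain rfl : e' = e := Sum.inr_injective heq
          exact (hFmem _).mpr ⟨he', he⟩
      · exact fun he => ((hFmem e).mp he).2
    have hdegv : ∀ v ∈ S, ((W' : Set (α ⊕ Finset α)) ∩ H.incidence.neighborSet (Sum.inl v)).ncard
        = (F.filter (fun e => v ∈ e)).card := by
      intro v hvS
      have hseteq : ((W' : Set (α ⊕ Finset α)) ∩ H.incidence.neighborSet (Sum.inl v))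
          = (((F.filter (fun e => v ∈ e)).image Sum.inr : Finset (α ⊕ Finset α)) : Set (α ⊕ Finset α)) := by
        ext x
        simp only [Set.mem_inter_iff, SimpleGraph.mem_neighborSet, FinHypergraph.incidence_adj,
          Finset.coe_image, Set.mem_image, Finset.mem_coe, Finset.mem_filter]
        constructor
        · rintro ⟨hxW, hadj⟩
          rcases hadj with ⟨v', e, heq, rfl, heE, hve⟩ | ⟨v', e, heq, -, -, -⟩
          · obtain rfl : v' = v := Sum.inl_injective heq.symm
            exact ⟨e, ⟨(hFW e).mp hxW, hve⟩, rfl⟩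
          · exact absurd heq (by simp)
        · rintro ⟨e, ⟨heF, hve⟩, rfl⟩
          exact ⟨(hFW e).mpr heF, Or.inl ⟨v, e, rfl, rfl, ((hFmem e).mp heF).1, hve⟩⟩
      rw [hseteq, Set.ncard_coe_finset, Finset.card_image_of_injective _ Sum.inr_injective]
    have hdege : ∀ e ∈ F, ((W' : Set (α ⊕ Finset α)) ∩ H.incidence.neighborSet (Sum.inr e)).ncard
        = (e ∩ S).card := by
      intro e heF
      have heE : e ∈ H.E := ((hFmem e).mp heF).1
      have hseteq : ((W' : Set (α ⊕ Finset α)) ∩ H.incidence.neighborSet (Sum.inr e))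
          = (((e ∩ S).image Sum.inl : Finset (α ⊕ Finset α)) : Set (α ⊕ Finset α)) := by
        ext x
        simp only [Set.mem_inter_iff, SimpleGraph.mem_neighborSet, FinHypergraph.incidence_adj,
          Finset.coe_image, Set.mem_image, Finset.mem_coe, Finset.mem_inter]
        constructor
        · rintro ⟨hxW, hadj⟩
          rcases hadj with ⟨v', e', heq, -, -, -⟩ | ⟨v', e', heq, rfl, heE', hve⟩
          · exact absurd heq (by simp)
          · obtain rfl : e' = e := Sum.inr_injective heq.symm
            exact ⟨v', ⟨hve, (hSW v').mp hxW⟩, rfl⟩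
        · rintro ⟨v', ⟨hve, hvS⟩, rfl⟩
          exact ⟨(hSW v').mpr hvS, Or.inr ⟨v', e, rfl, rfl, heE, hve⟩⟩
      rw [hseteq, Set.ncard_coe_finset, Finset.card_image_of_injective _ Sum.inl_injective]
    by_cases hA : ∃ e ∈ F, (e ∩ S).card ≤ d₀
    · obtain ⟨e, heF, hle⟩ := hA
      exact ⟨Sum.inr e, (hFW e).mpr heF, by rw [hdege e heF]; exact hle⟩
    push_neg at hA
    have hSne : S.Nonempty := by
      rcases Finset.eq_empty_or_nonempty S with hS0 | h
      · exfalso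
        obtain ⟨x, hx⟩ := hW'ne
        rcases Finset.mem_union.mp (hW'sub hx) with h | h
        · obtain ⟨v, hv, rfl⟩ := Finset.mem_image.mp h
          have hvS : v ∈ S := (hSW v).mp hx
          rw [hS0] at hvS
          exact absurd hvS (Finset.notMem_empty v)
        · obtain ⟨e, he, rfl⟩ := Finset.mem_image.mp h
          have heF : e ∈ F := (hFW e).mp hx
          have hlt := hA e heF
          rw [hS0] at hlt
          simp at hlt
      · exact h
    obtain ⟨v, hvS, hvmax⟩ := Finset.exists_max_image S
      (fun u => (thePath hT r (m u)).length) hSne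
    have hvV : v ∈ H.V := ((hSmem v).mp hvS).1
    have hclaim : ∀ e ∈ F, v ∈ e → e ∩ S ⊆ D.bag (m v) := by
      intro e heF hve u hu
      obtain ⟨hue, huS⟩ := Finset.mem_inter.mp hu
      have huV : u ∈ H.V := ((hSmem u).mp huS).1
      obtain ⟨t, ht⟩ := D.edge_bag e ((hFmem e).mp heF).1
      exact gateway_mem hT r (D.bag_conn u huV) (hm2 u huV) (hm1 u huV)
        (hm2 v hvV t (ht hve)) (ht hue) (hvmax u huS)
    set K : ℝ := ((F.filter (fun e => v ∈ e)).card : ℝ) with hKdef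
    have hK0 : (0:ℝ) ≤ K := by rw [hKdef]; exact Nat.cast_nonneg _
    have key : ∀ ε : ℝ, 0 < ε → K / 2 ≤ ω + ε * (1 + K / (2*ω)) := by
      intro ε hε
      obtain ⟨y, hy01, hycov, hysum⟩ := hcover (m v) ε hε
      have hye : ∀ e ∈ F.filter (fun e => v ∈ e), 1 - y e ≤ (ω + ε) / (2*ω) := by
        intro e he'
        obtain ⟨heF, hve⟩ := Finset.mem_filter.mp he'
        have heE : e ∈ H.E := ((hFmem e).mp heF).1
        have hsub : e ∩ S ⊆ D.bag (m v) := hclaim e heF hve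
        have hN : 2 * (H.eta:ℝ) * ω < ((e ∩ S).card : ℝ) := by
          have h1 : (d₀:ℝ) + 1 ≤ ((e ∩ S).card : ℝ) := by
            have := Nat.succ_le_of_lt (hA e heF)
            exact_mod_cast this
          have h2 : 2 * (H.eta:ℝ) * ω < (d₀:ℝ) + 1 := by
            rw [hd₀]
            exact_mod_cast Nat.lt_floor_add_one (2 * (H.eta:ℝ) * ω)
          linarith
        have step1 : ((e ∩ S).card : ℝ) ≤ ∑ u ∈ e ∩ S, ∑ f ∈ H.E, (if u ∈ f then y f else 0) := by
          calc ((e ∩ S).card : ℝ) = ∑ _u ∈ e ∩ S, (1:ℝ) := by simp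
            _ ≤ _ := Finset.sum_le_sum fun u hu =>
                hycov u (D.bag_sub (m v) (hsub hu)) (hsub hu)
        have step2 : ∑ u ∈ e ∩ S, ∑ f ∈ H.E, (if u ∈ f then y f else 0)
            = ∑ f ∈ H.E, (((e ∩ S) ∩ f).card : ℝ) * y f := by
          rw [Finset.sum_comm]
          refine Finset.sum_congr rfl fun f _ => ?_
          rw [← Finset.sum_filter, Finset.sum_const, Finset.filter_mem_eq_inter, nsmul_eq_mul]
        have step3 : ∑ f ∈ H.E, (((e ∩ S) ∩ f).card : ℝ) * y f
            ≤ ((e ∩ S).card : ℝ) * y e + (H.eta:ℝ) * (ω + ε) := by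
          rw [← Finset.add_sum_erase _ _ heE]
          have he1 : (e ∩ S) ∩ e = e ∩ S := Finset.inter_eq_left.mpr
            (fun x hx => (Finset.mem_inter.mp hx).1)
          rw [he1]
          refine add_le_add_right ?_ _
          calc ∑ f ∈ H.E.erase e, (((e ∩ S) ∩ f).card : ℝ) * y f
              ≤ ∑ f ∈ H.E.erase e, (H.eta:ℝ) * y f := by
                refine Finset.sum_le_sum fun f hf => ?_
                have hfE : f ∈ H.E := Finset.mem_of_mem_erase hf
                have hfe : f ≠ e := Finset.ne_of_mem_erase hf
                have hcard : (((e ∩ S) ∩ f).card : ℝ) ≤ (H.eta:ℝ) := by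
                  have hsub2 : (e ∩ S) ∩ f ⊆ e ∩ f := by
                    intro x hx
                    obtain ⟨hx1, hx2⟩ := Finset.mem_inter.mp hx
                    exact Finset.mem_inter.mpr ⟨(Finset.mem_inter.mp hx1).1, hx2⟩
                  have hle := le_trans (Finset.card_le_card hsub2)
                    (heta_ge e heE f hfE hfe.symm)
                  exact_mod_cast hle
                exact mul_le_mul_of_nonneg_right hcard (hy01 f).1
            _ = (H.eta:ℝ) * ∑ f ∈ H.E.erase e, y f := by rw [Finset.mul_sum]
            _ ≤ (H.eta:ℝ) * (ω + ε) := by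
                refine mul_le_mul_of_nonneg_left ?_ (by linarith)
                exact le_trans (Finset.sum_le_sum_of_subset_of_nonneg
                  (Finset.erase_subset _ _) fun f _ _ => (hy01 f).1) hysum.le
        have hcount : ((e ∩ S).card : ℝ)
            ≤ ((e ∩ S).card : ℝ) * y e + (H.eta:ℝ) * (ω + ε) := by
          rw [step2] at step1
          exact le_trans step1 step3
        rw [le_div_iff₀ (by linarith : (0:ℝ) < 2*ω)]
        rcases le_or_gt (1 - y e) 0 with hcase | hcase
        · nlinarith
        · have h1 : (1 - y e) * (2 * (H.eta:ℝ) * ω) ≤ (1 - y e) * ((e ∩ S).card : ℝ) :=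
            mul_le_mul_of_nonneg_left hN.le hcase.le
          have h2 : (1 - y e) * ((e ∩ S).card : ℝ) ≤ (H.eta:ℝ) * (ω + ε) := by nlinarith
          have h3 : (H.eta:ℝ) * ((1 - y e) * (2 * ω)) ≤ (H.eta:ℝ) * (ω + ε) := by nlinarith
          have hηpos : (0:ℝ) < (H.eta:ℝ) := by linarith
          exact (mul_le_mul_iff_right₀ hηpos).mp h3
      have hsum1 : K - ∑ e ∈ F.filter (fun e => v ∈ e), y e ≤ K * ((ω + ε)/(2*ω)) := by
        have heq1 : K - ∑ e ∈ F.filter (fun e => v ∈ e), y e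
            = ∑ e ∈ F.filter (fun e => v ∈ e), (1 - y e) := by
          rw [Finset.sum_sub_distrib, Finset.sum_const, nsmul_eq_mul, mul_one, hKdef]
        rw [heq1]
        calc ∑ e ∈ F.filter (fun e => v ∈ e), (1 - y e)
            ≤ ∑ _e ∈ F.filter (fun e => v ∈ e), (ω + ε)/(2*ω) := Finset.sum_le_sum hye
          _ = K * ((ω + ε)/(2*ω)) := by rw [Finset.sum_const, nsmul_eq_mul, hKdef]
      have hsum2 : ∑ e ∈ F.filter (fun e => v ∈ e), y e ≤ ω + ε := by
        have hsub3 : F.filter (fun e => v ∈ e) ⊆ H.E := fun f hf =>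
          ((hFmem f).mp (Finset.mem_filter.mp hf).1).1
        exact le_trans (Finset.sum_le_sum_of_subset_of_nonneg hsub3
          fun f _ _ => (hy01 f).1) hysum.le
      have hKc : K * ((ω + ε)/(2*ω)) = K/2 + ε * (K/(2*ω)) := by
        field_simp
      have hexp : ε * (1 + K/(2*ω)) = ε + ε * (K/(2*ω)) := by ring
      linarith
    have hK2 : K / 2 ≤ ω := by
      refine le_of_forall_pos_le_add fun ε' hε' => ?_
      have hq0 : (0:ℝ) ≤ K/(2*ω) := div_nonneg hK0 (by linarith)
      have hc0 : (0:ℝ) < 1 + K/(2*ω) := by linarith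
      have hkey := key (ε' / (1 + K/(2*ω))) (div_pos hε' hc0)
      rwa [div_mul_cancel₀ _ hc0.ne'] at hkey
    have hKfin : K ≤ 2 * (H.eta:ℝ) * ω := by nlinarith
    refine ⟨Sum.inl v, ((hSmem v).mp hvS).2, ?_⟩
    rw [hdegv v hvS]
    rw [hd₀]
    refine Nat.le_floor ?_
    rw [← hKdef] at *
    exact hKfin
  have hfin : H.mu ≤ d₀ := by
    unfold FinHypergraph.mu degeneracyOn
    exact Nat.sInf_le hmem
  calc (H.mu : ℝ) ≤ (d₀ : ℝ) := by exact_mod_cast hfin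
    _ ≤ 2 * (H.eta:ℝ) * ω := by rw [hd₀]; exact Nat.floor_le h2ηω0
end
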